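/- Let b, N be positive integers with b ≤ N, and let f be a real polynomial of degree less than N - b. Let B : ℝ[x] → ℝ^b be a linear map (b linear boundary functionals) such that the b×b matrix with columns B(x^0), ..., B(x^{b-1}) is invertible. Then for any g ∈ ℝ^b there exists a unique polynomial u of degree less than N such that the b-th derivative of u equals f and B(u) = g. -/
import Mathlib

open Polynomial

private lemma natDegree_lt_of_iter_deriv_zero {u : ℝ[X]} {b : ℕ} (hb : 0 < b)
    (h : Polynomial.derivative^[b] u = 0) : u.natDegree < b := by
  by_cases h0 : u = 0
  · simpa [h0] using hb
  by_contra hlt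
  push_neg at hlt
  have hc := Polynomial.coeff_iterate_derivative (k := b) u (u.natDegree - b)
  rw [h, coeff_zero, Nat.sub_add_cancel hlt] at hc
  have hlc : u.coeff u.natDegree ≠ 0 := mt Polynomial.leadingCoeff_eq_zero.mp h0
  have hd : (u.natDegree).descFactorial b ≠ 0 := fun h =>
    absurd (Nat.descFactorial_eq_zero_iff_lt.mp h) (not_lt.mpr hlt)
  rw [nsmul_eq_mul] at hc
  exact (mul_ne_zero (by exact_mod_cast hd) hlc) hc.symm

/-- **Lemma 2.1.** For `∂^b u = f` with `f ∈ Π_{N-b}` and `b`-many linear boundary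
functionals `B` whose matrix on the monomials `x^0, …, x^{b-1}` is invertible,
there is a unique solution `u ∈ Π_N`. -/
theorem tau_straight_derivatives
    (b N : ℕ) (hb : 0 < b) (hbN : b ≤ N)
    (f : ℝ[X]) (hf : f ∈ Polynomial.degreeLT ℝ (N - b))
    (B : ℝ[X] →ₗ[ℝ] (Fin b → ℝ))
    (hB : (Matrix.of fun i j : Fin b => B (Polynomial.X ^ (j : ℕ)) i).det ≠ 0)
    (g : Fin b → ℝ) :
    ∃! u : ℝ[X], u ∈ Polynomial.degreeLT ℝ N ∧
      Polynomial.derivative^[b] u = f ∧ B u = g := by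
  classical
  set M : Matrix (Fin b) (Fin b) ℝ := Matrix.of fun i j : Fin b => B (X ^ (j : ℕ)) i with hM
  set D : ℝ[X] →ₗ[ℝ] ℝ[X] := (Polynomial.derivative : ℝ[X] →ₗ[ℝ] ℝ[X]) ^ b with hDdef
  have hDapp : ∀ p : ℝ[X], D p = Polynomial.derivative^[b] p := fun p =>
    Module.End.pow_apply _ _ _
  have hmem : ∀ u : ℝ[X], u ∈ degreeLT ℝ N → Polynomial.derivative^[b] u ∈ degreeLT ℝ (N - b) := by
    intro u hu
    rw [mem_degreeLT] at hu ⊢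
    by_cases h0 : Polynomial.derivative^[b] u = 0
    · rw [h0, degree_zero]; exact WithBot.bot_lt_coe _
    · have hu0 : u ≠ 0 := by rintro rfl; simp at h0
      have hdb : b ≤ u.natDegree := by
        by_contra hlt; push_neg at hlt
        exact h0 (iterate_derivative_eq_zero hlt)
      have h1 : u.natDegree < N := by rwa [natDegree_lt_iff_degree_lt hu0]
      have h2 : (Polynomial.derivative^[b] u).natDegree < N - b :=
        lt_of_le_of_lt (natDegree_iterate_derivative u b) (by omega)
      calc (Polynomial.derivative^[b] u).degree
          ≤ ((Polynomial.derivative^[b] u).natDegree : WithBot ℕ) := degree_le_natDegree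
        _ < ((N - b : ℕ) : WithBot ℕ) := by exact_mod_cast h2
  set V := degreeLT ℝ N with hV
  set W := degreeLT ℝ (N - b) with hW
  set T : V →ₗ[ℝ] W × (Fin b → ℝ) :=
    LinearMap.prod
      (LinearMap.codRestrict W (D.comp V.subtype) (fun u => by
        rw [LinearMap.comp_apply, hDapp]; exact hmem u.1 u.2))
      (B.comp V.subtype) with hT
  have hMunit : IsUnit M := by
    rw [Matrix.isUnit_iff_isUnit_det]; exact isUnit_iff_ne_zero.2 hB
  have key : ∀ u : ℝ[X], Polynomial.derivative^[b] u = 0 → B u = 0 → u = 0 := by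
    intro u hu hBu
    have hdeg : u.natDegree < b := natDegree_lt_of_iter_deriv_zero hb hu
    have hrep := Polynomial.as_sum_range' u b hdeg
    set c : Fin b → ℝ := fun j => u.coeff j with hc
    have hBsum : B u = ∑ j : Fin b, c j • B (X ^ (j : ℕ)) := by
      conv_lhs => rw [hrep]
      rw [map_sum, ← Fin.sum_univ_eq_sum_range (fun i => B (monomial i (u.coeff i)))]
      refine Finset.sum_congr rfl fun j _ => ?_
      rw [← smul_X_eq_monomial, map_smul]
    have hmv : M.mulVec c = 0 := by
      funext i
      have : (0 : Fin b → ℝ) i = B u i := by rw [hBu]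
      rw [hBsum] at this
      have h2 : (0 : ℝ) = ∑ j : Fin b, c j * B (X ^ (j : ℕ)) i := by
        simpa [Finset.sum_apply] using this
      simp only [Matrix.mulVec, dotProduct, Pi.zero_apply]
      calc ∑ x : Fin b, M i x * c x = ∑ x : Fin b, c x * B (X ^ (x : ℕ)) i := by
            refine Finset.sum_congr rfl fun x _ => ?_
            simp [M, mul_comm]
        _ = 0 := h2.symm
    have hcz : c = 0 := by
      have hinj := Matrix.mulVec_injective_iff_isUnit.mpr hMunit
      exact hinj (show M.mulVec c = M.mulVec 0 by rw [hmv, Matrix.mulVec_zero])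
    rw [hrep]
    refine Finset.sum_eq_zero fun i hi => ?_
    have : u.coeff i = 0 := by
      have := congrFun hcz ⟨i, Finset.mem_range.mp hi⟩
      simpa [hc] using this
    simp [this]
  haveI : FiniteDimensional ℝ V := (Polynomial.degreeLTEquiv ℝ N).symm.finiteDimensional
  haveI : FiniteDimensional ℝ W := (Polynomial.degreeLTEquiv ℝ (N - b)).symm.finiteDimensional
  have hfr : Module.finrank ℝ V = Module.finrank ℝ (W × (Fin b → ℝ)) := by
    rw [Module.finrank_prod, (Polynomial.degreeLTEquiv ℝ N).finrank_eq,
      (Polynomial.degreeLTEquiv ℝ (N - b)).finrank_eq]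
    simp only [Module.finrank_fin_fun]
    omega
  have hinj : Function.Injective T := by
    rw [← LinearMap.ker_eq_bot, LinearMap.ker_eq_bot']
    intro u hu
    have h1 : Polynomial.derivative^[b] (u : ℝ[X]) = 0 := by
      have := congrArg (fun p => ((p.1 : W) : ℝ[X])) hu
      simpa [hT, hDapp] using this
    have h2 : B (u : ℝ[X]) = 0 := by
      have := congrArg Prod.snd hu
      simpa [hT] using this
    exact Subtype.ext (key u.1 h1 h2)
  have hsurj : Function.Surjective T :=
    (LinearMap.injective_iff_surjective_of_finrank_eq_finrank hfr).mp hinj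
  obtain ⟨u, hu⟩ := hsurj (⟨f, hf⟩, g)
  have hu1 : Polynomial.derivative^[b] (u : ℝ[X]) = f := by
    have := congrArg (fun p => ((p.1 : W) : ℝ[X])) hu
    simpa [hT, hDapp] using this
  have hu2 : B (u : ℝ[X]) = g := by
    have := congrArg Prod.snd hu
    simpa [hT] using this
  refine ⟨u.1, ⟨u.2, hu1, hu2⟩, ?_⟩
  rintro v ⟨hv, hdv, hBv⟩
  have : T ⟨v, hv⟩ = T u := by
    rw [hu]
    refine Prod.ext (Subtype.ext ?_) ?_
    · simpa [hT, hDapp] using hdv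
    · simpa [hT] using hBv
  exact congrArg Subtype.val (hinj this)
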